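/- Define k_n(x,y) = Σ_{k=0}^{n−1} p_k(x) q_k(y) (where x may be complex) and K_n(x,y) = Σ_{k=0}^{n−1} P_k(x) Q_k(y). Then for all x, y > 0 and every ρ with 0 < ρ < 1, K_n(x,y) = (μ/2πi) ∮_{|s|=ρ} ( ∫₀^1 (t/s)^ν k_n(x/s, y/t) (1−s)^{−μ−1} (1−t)^{μ−1} dt/t ) ds/s, where the contour is the counterclockwise circle of radius ρ centered at 0. -/

import Mathlib

open MeasureTheory Set


private lemma aux_circleIntegral_sum {ι : Type*} (u : Finset ι) (f : ι → ℂ → ℂ) (c : ℂ) (R : ℝ)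
    (h : ∀ i ∈ u, CircleIntegrable (f i) c R) :
    (∮ z in C(c, R), ∑ i ∈ u, f i z) = ∑ i ∈ u, ∮ z in C(c, R), f i z := by
  simp only [circleIntegral, Finset.smul_sum]
  exact intervalIntegral.integral_finset_sum fun i hi => (h i hi).out

private lemma aux_circleIntegral_add {f g : ℂ → ℂ} {c : ℂ} {R : ℝ}
    (hf : CircleIntegrable f c R) (hg : CircleIntegrable g c R) :
    (∮ z in C(c, R), (f z + g z)) = (∮ z in C(c, R), f z) + ∮ z in C(c, R), g z := by
  simp only [circleIntegral, smul_add]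
  exact intervalIntegral.integral_add hf.out hg.out

private lemma aux_contOn {ρ : ℝ} (h0 : 0 < ρ) (h1 : ρ < 1) (m l : ℤ) :
    ContinuousOn (fun s : ℂ => s ^ m * (1 - s) ^ l) (Metric.sphere (0:ℂ) ρ) := by
  intro s hs
  have hsn : ‖s‖ = ρ := mem_sphere_zero_iff_norm.mp hs
  have hs0 : s ≠ 0 := by
    intro h; rw [h, norm_zero] at hsn; exact h0.ne' hsn.symm
  have hs1 : (1:ℂ) - s ≠ 0 := by
    intro h; rw [sub_eq_zero] at h; rw [← h, norm_one] at hsn; linarith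
  exact ((continuousAt_zpow₀ s m (Or.inl hs0)).mul
    (((continuousAt_zpow₀ (1 - s) l (Or.inl hs1)).comp
      ((continuous_const.sub continuous_id).continuousAt)))).continuousWithinAt

private lemma aux_cInt {ρ : ℝ} (h0 : 0 < ρ) (h1 : ρ < 1) (m l : ℤ) :
    CircleIntegrable (fun s : ℂ => s ^ m * (1 - s) ^ l) 0 ρ :=
  (aux_contOn h0 h1 m l).circleIntegrable h0.le

private lemma aux_rec {ρ : ℝ} (h0 : 0 < ρ) (h1 : ρ < 1) (A B : ℤ) :
    (∮ s in C(0, ρ), s ^ (A - 1) * (1 - s) ^ (B - 1)) =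
      (∮ s in C(0, ρ), s ^ (A - 1) * (1 - s) ^ B) +
        ∮ s in C(0, ρ), s ^ A * (1 - s) ^ (B - 1) := by
  rw [← aux_circleIntegral_add (aux_cInt h0 h1 (A - 1) B) (aux_cInt h0 h1 A (B - 1))]
  refine circleIntegral.integral_congr h0.le fun s hs => ?_
  have hsn : ‖s‖ = ρ := mem_sphere_zero_iff_norm.mp hs
  have hs0 : s ≠ 0 := by
    intro h; rw [h, norm_zero] at hsn; exact h0.ne' hsn.symm
  have hs1 : (1:ℂ) - s ≠ 0 := by
    intro h; rw [sub_eq_zero] at h; rw [← h, norm_one] at hsn; linarith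
  rw [zpow_sub_one₀ hs0, zpow_sub_one₀ hs1]
  field_simp
  ring

private lemma aux_J {ρ : ℝ} (h0 : 0 < ρ) (h1 : ρ < 1) :
    ∀ l m : ℕ, (∮ s in C(0, ρ), s ^ (-(m : ℤ) - 1) * (1 - s) ^ (-(l : ℤ) - 1)) =
      2 * Real.pi * Complex.I * ((m + l).choose m : ℂ) := by
  have hcauchy : ∀ L : ℤ, (∮ s in C(0, ρ), s ^ (-1 : ℤ) * (1 - s) ^ L) =
      2 * Real.pi * Complex.I := by
    intro L
    have hd : DifferentiableOn ℂ (fun s : ℂ => (1 - s) ^ L) (Metric.closedBall 0 ρ) := by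
      intro z hz
      have hz1 : (1:ℂ) - z ≠ 0 := by
        intro h; rw [sub_eq_zero] at h
        have hzn : ‖z‖ ≤ ρ := mem_closedBall_zero_iff.mp hz
        rw [← h, norm_one] at hzn; linarith
      exact (((differentiableAt_zpow.mpr (Or.inl hz1)).comp z
        ((differentiableAt_const (1:ℂ)).sub differentiableAt_id)).differentiableWithinAt)
    have hint := hd.circleIntegral_sub_inv_smul (Metric.mem_ball_self h0)
    simp only [sub_zero, smul_eq_mul, one_zpow, mul_one] at hint
    simp only [zpow_neg, zpow_one]
    exact hint
  intro l
  induction l with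
  | zero =>
    intro m
    induction m with
    | zero =>
      simp only [Nat.cast_zero, neg_zero, zero_sub]
      rw [hcauchy (-1)]
      norm_num
    | succ m ihm =>
      simp only [Nat.cast_zero, neg_zero, zero_sub] at ihm ⊢
      simp only [show (-(↑(m+1):ℤ) - 1) = (-(m:ℤ) - 1) - 1 from by push_cast; ring,
        show (-1 : ℤ) = (0:ℤ) - 1 from by ring]
      rw [aux_rec h0 h1 (-(m:ℤ) - 1) 0]
      have hz : (∮ s in C(0, ρ), s ^ ((-(m:ℤ) - 1) - 1) * (1 - s) ^ (0:ℤ)) = 0 := by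
        have h := circleIntegral.integral_sub_zpow_of_ne
          (n := (-(m:ℤ) - 1) - 1) (by omega) 0 0 ρ
        simp only [sub_zero] at h
        calc (∮ s in C(0, ρ), s ^ ((-(m:ℤ) - 1) - 1) * (1 - s) ^ (0:ℤ))
            = ∮ s in C(0, ρ), s ^ ((-(m:ℤ) - 1) - 1) :=
              circleIntegral.integral_congr h0.le fun s _ => by simp
          _ = 0 := h
      rw [hz, show ((0:ℤ) - 1) = (-1 : ℤ) from by ring, ihm]
      norm_num [Nat.choose_self]
  | succ l ihl =>
    intro m
    induction m with
    | zero =>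
      simp only [Nat.cast_zero, neg_zero, zero_sub]
      rw [hcauchy _]
      norm_num [Nat.choose_zero_right]
    | succ m ihm =>
      simp only [show (-(↑(m+1):ℤ) - 1) = (-(m:ℤ) - 1) - 1 from by push_cast; ring,
        show (-(↑(l+1):ℤ) - 1) = (-(l:ℤ) - 1) - 1 from by push_cast; ring]
      rw [aux_rec h0 h1 (-(m:ℤ) - 1) (-(l:ℤ) - 1)]
      rw [show ((-(m:ℤ) - 1) - 1) = (-(↑(m+1):ℤ) - 1) from by push_cast; ring,
        show ((-(l:ℤ) - 1) - 1) = (-(↑(l+1):ℤ) - 1) from by push_cast; ring]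
      rw [ihl (m+1), ihm]
      have hp : (m + 1 + (l+1)).choose (m+1) = (m+(l+1)).choose m + (m+1+l).choose (m+1) := by
        rw [show m+(l+1) = m+l+1 from by ring, show m+1+l = m+l+1 from by ring,
          show m+1+(l+1) = (m+l+1)+1 from by ring]
        exact Nat.choose_succ_succ _ _
      push_cast [hp]
      ring


private lemma aux_intA {g : ℝ → ℝ} (hg : Measurable g)
    (hgint : IntegrableOn (fun x => |g x|) (Ioi (0:ℝ))) {y : ℝ} (hy : 0 < y)
    (ν m : ℕ) :
    IntegrableOn (fun t : ℝ => t ^ ν * (1 - t) ^ m * g (y / t) / t) (Ioo (0:ℝ) 1) := by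
  set G : ℝ → ℝ := fun u => (y/u)^(ν+1) * (1 - y/u)^m * g u / y with hGdef
  have himg : (fun t : ℝ => y / t) '' Ioo 0 1 = Ioi y := by
    ext u
    constructor
    · rintro ⟨t, ⟨ht0, ht1⟩, rfl⟩
      exact mem_Ioi.mpr ((lt_div_iff₀ ht0).mpr (by nlinarith))
    · intro hu
      have hu' : 0 < u := lt_trans hy hu
      refine ⟨y / u, ⟨div_pos hy hu', (div_lt_one hu').mpr hu⟩, ?_⟩
      field_simp
  have hGint : IntegrableOn G (Ioi y) := by
    have hmeas : AEStronglyMeasurable G (volume.restrict (Ioi y)) := by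
      apply Measurable.aestronglyMeasurable
      exact ((((measurable_const.div measurable_id).pow_const _).mul
        ((measurable_const.sub (measurable_const.div measurable_id)).pow_const _)).mul
          hg).div_const y
    refine Integrable.mono' ((hgint.mono_set (Ioi_subset_Ioi hy.le)).const_mul (1/y)) hmeas ?_
    refine (ae_restrict_iff' measurableSet_Ioi).mpr (Filter.Eventually.of_forall fun u hu => ?_)
    have hu' : 0 < u := lt_trans hy hu
    have h1 : 0 < y / u := div_pos hy hu'
    have h2 : y / u < 1 := (div_lt_one hu').mpr hu
    have e1 : |(y/u)^(ν+1)| ≤ 1 := by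
      rw [abs_of_pos (pow_pos h1 _)]; exact pow_le_one₀ h1.le h2.le
    have e2 : |(1 - y/u)^m| ≤ 1 := by
      rw [abs_of_nonneg (pow_nonneg (by linarith) m)]
      exact pow_le_one₀ (by linarith) (by linarith)
    have : ‖G u‖ = |(y/u)^(ν+1)| * |(1 - y/u)^m| * |g u| / y := by
      simp [hGdef, abs_mul, abs_div, abs_of_pos hy]
    rw [this]
    calc |(y/u)^(ν+1)| * |(1 - y/u)^m| * |g u| / y ≤ 1 * 1 * |g u| / y := by
          gcongr
      _ = 1/y * |g u| := by ring
  have hderiv : ∀ t ∈ Ioo (0:ℝ) 1, HasDerivWithinAt (fun t : ℝ => y / t) (-(y / t^2)) (Ioo 0 1) t := by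
    intro t ht
    have h : HasDerivAt (fun t : ℝ => y / t) (-(y / t^2)) t := by
      have := (hasDerivAt_inv (ne_of_gt ht.1)).const_mul y
      simpa [div_eq_mul_inv, neg_div, mul_comm] using this
    exact h.hasDerivWithinAt
  have hinj : InjOn (fun t : ℝ => y / t) (Ioo 0 1) := by
    intro t1 h1 t2 h2 h
    have ht1 : t1 ≠ 0 := h1.1.ne'
    have ht2 : t2 ≠ 0 := h2.1.ne'
    have h' : y / t1 = y / t2 := h
    rw [div_eq_div_iff ht1 ht2] at h'
    exact (mul_left_cancel₀ hy.ne' h').symm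
  have key := (integrableOn_image_iff_integrableOn_abs_deriv_smul measurableSet_Ioo
    hderiv hinj G).mp (himg ▸ hGint)
  refine key.congr_fun (fun t ht => ?_) measurableSet_Ioo
  have ht0 : (0:ℝ) < t := ht.1
  have hyt : y / (y / t) = t := by field_simp
  beta_reduce
  rw [smul_eq_mul, abs_neg, abs_of_pos (div_pos hy (pow_pos ht0 2)), hGdef]
  simp only [hyt]
  field_simp
  ring

/-- Double contour integral formula for the correlation kernel of the squared
singular values after multiplication by a truncated Haar unitary matrix with
parameters `ν, μ`. -/
theorem stmt12
    (n : ℕ) (hn : 1 ≤ n) (ν μ : ℕ) (hμ : 1 ≤ μ)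
    (a : ℕ → ℕ → ℝ) (ha : ∀ k < n, a k k ≠ 0)
    (p : ℕ → ℝ → ℝ)
    (hp : ∀ k < n, ∀ x : ℝ, p k x = ∑ j ∈ Finset.range (k + 1), a j k * x ^ j)
    (q : ℕ → ℝ → ℝ) (hqmeas : ∀ k < n, Measurable (q k))
    (hqint : ∀ k < n, ∀ j < n, IntegrableOn (fun x => x ^ j * |q k x|) (Ioi 0))
    (hbiorth : ∀ j < n, ∀ k < n,
      ∫ x in Ioi (0:ℝ), p j x * q k x = if j = k then 1 else 0)
    (P : ℕ → ℝ → ℝ)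
    (hP : ∀ k < n, ∀ x : ℝ, P k x = (Nat.factorial (μ - 1) : ℝ)⁻¹ *
      ∑ j ∈ Finset.range (k + 1),
        (Nat.factorial (j + ν + μ) : ℝ) / (Nat.factorial (j + ν) : ℝ) * a j k * x ^ j)
    (Q : ℕ → ℝ → ℝ)
    (hQ : ∀ k < n, ∀ y ∈ Ioi (0:ℝ),
      Q k y = ∫ t in Ioo (0:ℝ) 1, t ^ ν * (1 - t) ^ (μ - 1) * q k (y / t) / t)
    (kn : ℂ → ℝ → ℂ)
    (hkn : ∀ (s : ℂ) (y : ℝ), kn s y = ∑ k ∈ Finset.range n,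
      (∑ j ∈ Finset.range (k + 1), (a j k : ℂ) * s ^ j) * (q k y : ℂ))
    (Kn : ℝ → ℝ → ℝ)
    (hKn : ∀ x y : ℝ, Kn x y = ∑ k ∈ Finset.range n, P k x * Q k y) :
    ∀ x ∈ Ioi (0:ℝ), ∀ y ∈ Ioi (0:ℝ), ∀ ρ : ℝ, 0 < ρ → ρ < 1 →
      (Kn x y : ℂ) = (μ : ℂ) * (2 * Real.pi * Complex.I)⁻¹ *
        ∮ s in C(0, ρ), (∫ t in Ioo (0:ℝ) 1,
          ((t : ℂ) / s) ^ ν * kn ((x : ℂ) / s) (y / t) *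
            (1 - s) ^ (-(μ : ℤ) - 1) * ((1 - t : ℝ) : ℂ) ^ (μ - 1) / (t : ℂ)) / s := by
  intro x hx y hy ρ hρ0 hρ1
  have hn0 : 0 < n := hn
  have hy0 : (0:ℝ) < y := hy
  have h2pi : (2 * (Real.pi:ℂ) * Complex.I) ≠ 0 := Complex.two_pi_I_ne_zero
  -- integrability of the t-integrands
  have hgint : ∀ k, k < n →
      IntegrableOn (fun t : ℝ => t ^ ν * (1 - t) ^ (μ - 1) * q k (y / t) / t) (Ioo (0:ℝ) 1) := by
    intro k hk
    have h0 : IntegrableOn (fun x => |q k x|) (Ioi (0:ℝ)) := by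
      simpa using hqint k hk 0 hn0
    exact aux_intA (hqmeas k hk) h0 hy0 ν (μ - 1)
  -- Step A : rewrite the contour integrand
  have hA : (∮ s in C(0, ρ), (∫ t in Ioo (0:ℝ) 1,
        ((t : ℂ) / s) ^ ν * kn ((x : ℂ) / s) (y / t) *
          (1 - s) ^ (-(μ : ℤ) - 1) * ((1 - t : ℝ) : ℂ) ^ (μ - 1) / (t : ℂ)) / s)
      = ∮ s in C(0, ρ), ∑ k ∈ Finset.range n, ∑ j ∈ Finset.range (k + 1),
          ((a j k * x ^ j * Q k y : ℝ) : ℂ) *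
            (s ^ (-((j + ν : ℕ) : ℤ) - 1) * (1 - s) ^ (-(μ : ℤ) - 1)) := by
    refine circleIntegral.integral_congr hρ0.le fun s hs => ?_
    have hsn : ‖s‖ = ρ := mem_sphere_zero_iff_norm.mp hs
    have hs0 : s ≠ 0 := by
      intro h; rw [h, norm_zero] at hsn; exact hρ0.ne' hsn.symm
    have hEq : EqOn
        (fun t : ℝ => ((t : ℂ) / s) ^ ν * kn ((x : ℂ) / s) (y / t) *
          (1 - s) ^ (-(μ : ℤ) - 1) * ((1 - t : ℝ) : ℂ) ^ (μ - 1) / (t : ℂ))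
        (fun t : ℝ => ∑ k ∈ Finset.range n,
          ((∑ j ∈ Finset.range (k + 1), (a j k : ℂ) * ((x : ℂ) / s) ^ j) *
              (1 - s) ^ (-(μ : ℤ) - 1) / s ^ ν) *
            ((t ^ ν * (1 - t) ^ (μ - 1) * q k (y / t) / t : ℝ) : ℂ))
        (Ioo (0:ℝ) 1) := by
      intro t ht
      have ht0 : (t : ℂ) ≠ 0 := Complex.ofReal_ne_zero.mpr ht.1.ne'
      simp only
      rw [hkn]
      push_cast
      simp only [Finset.sum_mul, Finset.mul_sum, Finset.sum_div, div_pow]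
      refine Finset.sum_congr rfl fun k _ => ?_
      refine Finset.sum_congr rfl fun j _ => ?_
      field_simp
    have hT : (∫ t in Ioo (0:ℝ) 1,
          ((t : ℂ) / s) ^ ν * kn ((x : ℂ) / s) (y / t) *
            (1 - s) ^ (-(μ : ℤ) - 1) * ((1 - t : ℝ) : ℂ) ^ (μ - 1) / (t : ℂ))
        = ∑ k ∈ Finset.range n,
            ((∑ j ∈ Finset.range (k + 1), (a j k : ℂ) * ((x : ℂ) / s) ^ j) *
                (1 - s) ^ (-(μ : ℤ) - 1) / s ^ ν) * ((Q k y : ℝ) : ℂ) := by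
      have hintg : ∀ k ∈ Finset.range n, Integrable (fun t : ℝ =>
          ((∑ j ∈ Finset.range (k + 1), (a j k : ℂ) * ((x : ℂ) / s) ^ j) *
              (1 - s) ^ (-(μ : ℤ) - 1) / s ^ ν) *
            ((t ^ ν * (1 - t) ^ (μ - 1) * q k (y / t) / t : ℝ) : ℂ))
          (volume.restrict (Ioo (0:ℝ) 1)) :=
        fun k hk => ((hgint k (Finset.mem_range.mp hk)).ofReal.const_mul _)
      rw [setIntegral_congr_fun measurableSet_Ioo hEq,
        integral_finset_sum _ hintg]
      refine Finset.sum_congr rfl fun k hk => ?_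
      rw [integral_const_mul]
      congr 1
      rw [hQ k (Finset.mem_range.mp hk) y hy]
      exact integral_ofReal
    rw [hT]
    simp only [Finset.sum_mul, Finset.sum_div]
    refine Finset.sum_congr rfl fun k _ => ?_
    refine Finset.sum_congr rfl fun j _ => ?_
    rw [show (-((j + ν : ℕ) : ℤ) - 1) = -(((j + ν + 1 : ℕ)) : ℤ) from by push_cast; ring,
      zpow_neg, zpow_natCast]
    push_cast
    simp only [div_pow]
    field_simp
    ring
  rw [hA]
  -- Step B : compute the contour integral
  have hint1 : ∀ k j : ℕ, CircleIntegrable (fun s : ℂ =>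
      ((a j k * x ^ j * Q k y : ℝ) : ℂ) *
        (s ^ (-((j + ν : ℕ) : ℤ) - 1) * (1 - s) ^ (-(μ : ℤ) - 1))) 0 ρ :=
    fun k j => (continuousOn_const.mul (aux_contOn hρ0 hρ1 _ _)).circleIntegrable hρ0.le
  have hint2 : ∀ k : ℕ, CircleIntegrable (fun s : ℂ =>
      ∑ j ∈ Finset.range (k + 1), ((a j k * x ^ j * Q k y : ℝ) : ℂ) *
        (s ^ (-((j + ν : ℕ) : ℤ) - 1) * (1 - s) ^ (-(μ : ℤ) - 1))) 0 ρ := by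
    intro k
    refine ContinuousOn.circleIntegrable hρ0.le ?_
    exact continuousOn_finset_sum _ fun j _ =>
      continuousOn_const.mul (aux_contOn hρ0 hρ1 _ _)
  rw [aux_circleIntegral_sum _ _ _ _ (fun k _ => hint2 k)]
  have hBk : ∀ k : ℕ, (∮ s in C(0, ρ), ∑ j ∈ Finset.range (k + 1),
        ((a j k * x ^ j * Q k y : ℝ) : ℂ) *
          (s ^ (-((j + ν : ℕ) : ℤ) - 1) * (1 - s) ^ (-(μ : ℤ) - 1)))
      = ∑ j ∈ Finset.range (k + 1), ((a j k * x ^ j * Q k y : ℝ) : ℂ) *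
          (2 * Real.pi * Complex.I * (((j + ν) + μ).choose (j + ν) : ℂ)) := by
    intro k
    rw [aux_circleIntegral_sum _ _ _ _ (fun j _ => hint1 k j)]
    refine Finset.sum_congr rfl fun j _ => ?_
    rw [circleIntegral.integral_const_mul, aux_J hρ0 hρ1 μ (j + ν)]
  simp only [hBk]
  -- Step C : final bookkeeping
  rw [hKn x y]
  push_cast
  rw [Finset.mul_sum]
  refine Finset.sum_congr rfl fun k hk => ?_
  rw [hP k (Finset.mem_range.mp hk) x]
  push_cast
  rw [Finset.mul_sum, Finset.sum_mul, Finset.mul_sum]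
  refine Finset.sum_congr rfl fun j _ => ?_
  have hfac : ((j + ν + μ).factorial : ℂ) =
      (μ : ℂ) * (((j + ν) + μ).choose (j + ν) : ℂ) * ((j + ν).factorial : ℂ) *
        ((μ - 1).factorial : ℂ) := by
    have h1 : ((j + ν) + μ).choose (j + ν) * (j + ν).factorial * μ.factorial
        = ((j + ν) + μ).factorial := by
      have h := Nat.choose_mul_factorial_mul_factorial
        (Nat.le_add_right (j + ν) μ)
      simpa [Nat.add_sub_cancel_left] using h
    have h2 : μ * (μ - 1).factorial = μ.factorial := Nat.mul_factorial_pred (by omega)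
    have h3 : μ * (((j + ν) + μ).choose (j + ν)) * (j + ν).factorial * (μ - 1).factorial
        = (j + ν + μ).factorial := by rw [← h1, ← h2]; ring
    exact_mod_cast h3.symm
  have hf1 : ((j + ν).factorial : ℂ) ≠ 0 := Nat.cast_ne_zero.mpr (Nat.factorial_ne_zero _)
  have hf2 : ((μ - 1).factorial : ℂ) ≠ 0 := Nat.cast_ne_zero.mpr (Nat.factorial_ne_zero _)
  field_simp
  linear_combination ((a j k : ℂ) * (x : ℂ) ^ j * (Q k y : ℂ)) * hfac
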